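/- Let P be an n×n real symmetric positive definite matrix, and for c > 0 let θ(c) denote the unique value in (0, 1/λ_max(P)) satisfying γ(P, θ(c)) = c, where γ(P,θ) = (1/2)·(log det(I − θP) + tr((I − θP)^{-1} − I)). Then c ↦ θ(c) is strictly monotone increasing on (0, ∞). -/

import Mathlib

open Matrix Set

/-- The tolerance function `γ(P,θ) = (1/2)(log det(I−θP) + tr((I−θP)⁻¹ − I))` of the
robust extended Kalman filter. -/
noncomputable def gammaTol {n : ℕ} (P : Matrix (Fin n) (Fin n) ℝ) (θ : ℝ) : ℝ :=
  (1 / 2) * (Real.log ((1 : Matrix (Fin n) (Fin n) ℝ) - θ • P).det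
    + Matrix.trace (((1 : Matrix (Fin n) (Fin n) ℝ) - θ • P)⁻¹ - 1))

/-- Scalar building block: `x ↦ log(1-x) + (1-x)⁻¹` is strictly increasing on `[0,1)`. -/
lemma scalar_strictMonoOn :
    StrictMonoOn (fun x : ℝ => Real.log (1 - x) + (1 - x)⁻¹) (Set.Ico (0 : ℝ) 1) := by
  have hne : ∀ x ∈ Set.Ico (0 : ℝ) 1, (1 : ℝ) - x ≠ 0 := by
    intro x hx; have := hx.2; linarith [sub_pos.2 hx.2]
  have hcont : ContinuousOn (fun x : ℝ => Real.log (1 - x) + (1 - x)⁻¹) (Set.Ico (0:ℝ) 1) := by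
    have h1 : ContinuousOn (fun x : ℝ => (1 : ℝ) - x) (Set.Ico (0:ℝ) 1) :=
      (continuous_const.sub continuous_id).continuousOn
    exact (h1.log hne).add (h1.inv₀ hne)
  apply strictMonoOn_of_deriv_pos (convex_Ico 0 1) hcont
  intro x hx
  rw [interior_Ico] at hx
  have hx1 : (0:ℝ) < 1 - x := by linarith [hx.2]
  have hderiv : HasDerivAt (fun x : ℝ => Real.log (1 - x) + (1 - x)⁻¹)
      (-(1 - x)⁻¹ + (1 - x)⁻¹ ^ 2) x := by
    have hlin : HasDerivAt (fun x : ℝ => (1 : ℝ) - x) (-1) x := by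
      simpa using (hasDerivAt_id x).const_sub 1
    have hlog : HasDerivAt (fun x : ℝ => Real.log (1 - x)) ((1 - x)⁻¹ * (-1)) x :=
      (Real.hasDerivAt_log hx1.ne').comp x hlin
    have hinv : HasDerivAt (fun x : ℝ => (1 - x)⁻¹) (-(-1) / (1 - x) ^ 2) x :=
      hlin.inv hx1.ne'
    have : HasDerivAt (fun x : ℝ => Real.log (1 - x) + (1 - x)⁻¹)
        ((1 - x)⁻¹ * (-1) + -(-1) / (1 - x) ^ 2) x := hlog.add hinv
    convert this using 1
    rw [div_eq_mul_inv, ← inv_pow]; ring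
  rw [hderiv.deriv]
  have h1 : (1:ℝ) < (1 - x)⁻¹ := by
    rw [lt_inv_comm₀ one_pos hx1]; simpa using hx.1
  nlinarith [sq_nonneg ((1 - x)⁻¹)]

/-- Diagonalization formula for `gammaTol`. -/
lemma gammaTol_eq_sum {n : ℕ} (P : Matrix (Fin n) (Fin n) ℝ) (hP : P.PosDef) {t : ℝ}
    (h : ∀ i, 0 < 1 - t * hP.1.eigenvalues i) :
    gammaTol P t = (1 / 2) * ∑ i, (Real.log (1 - t * hP.1.eigenvalues i)
      + (1 - t * hP.1.eigenvalues i)⁻¹ - 1) := by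
  classical
  set lam := hP.1.eigenvalues with hlam
  set U : Matrix (Fin n) (Fin n) ℝ := (hP.1.eigenvectorUnitary : Matrix (Fin n) (Fin n) ℝ) with hUdef
  have hU1 : U * star U = 1 := mem_unitaryGroup_iff.mp (hP.1.eigenvectorUnitary).2
  have hU2 : star U * U = 1 := mem_unitaryGroup_iff'.mp (hP.1.eigenvectorUnitary).2
  have hspec : P = U * Matrix.diagonal lam * star U := by
    have := hP.1.spectral_theorem
    simpa [RCLike.ofReal_real_eq_id, Function.comp] using this
  set v : Fin n → ℝ := fun i => 1 - t * lam i with hv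
  have key : (1 : Matrix (Fin n) (Fin n) ℝ) - t • P = U * Matrix.diagonal v * star U := by
    have hdiag : Matrix.diagonal v
        = (1 : Matrix (Fin n) (Fin n) ℝ) - t • Matrix.diagonal lam := by
      ext i j
      by_cases hij : i = j
      · subst hij
        simp [v, Matrix.one_apply_eq]
      · simp [Matrix.diagonal_apply_ne _ hij, Matrix.one_apply_ne hij]
    rw [hdiag]
    simp only [Matrix.mul_sub, Matrix.sub_mul, Matrix.mul_one, Matrix.one_mul,
      Matrix.mul_smul, Matrix.smul_mul, hU1, hspec]
  have hvne : ∀ i, v i ≠ 0 := fun i => (h i).ne'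
  have hdet : ((1 : Matrix (Fin n) (Fin n) ℝ) - t • P).det = ∏ i, v i := by
    rw [key, Matrix.det_mul, Matrix.det_mul, Matrix.det_diagonal]
    have : U.det * (star U).det = 1 := by
      rw [← Matrix.det_mul, hU1, Matrix.det_one]
    calc U.det * (∏ i, v i) * (star U).det
        = (∏ i, v i) * (U.det * (star U).det) := by ring
      _ = ∏ i, v i := by rw [this, mul_one]
  have hinv : ((1 : Matrix (Fin n) (Fin n) ℝ) - t • P)⁻¹
      = U * Matrix.diagonal (fun i => (v i)⁻¹) * star U := by
    apply Matrix.inv_eq_right_inv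
    rw [key]
    have : Matrix.diagonal v * Matrix.diagonal (fun i => (v i)⁻¹) = 1 := by
      rw [Matrix.diagonal_mul_diagonal]
      have h1 : (fun i => v i * (v i)⁻¹) = fun _ => (1 : ℝ) :=
        funext fun i => mul_inv_cancel₀ (hvne i)
      rw [h1, Matrix.diagonal_one]
    calc U * Matrix.diagonal v * star U * (U * Matrix.diagonal (fun i => (v i)⁻¹) * star U)
        = U * (Matrix.diagonal v * ((star U * U) * Matrix.diagonal (fun i => (v i)⁻¹))) * star U := by
          simp only [Matrix.mul_assoc]
      _ = 1 := by rw [hU2, Matrix.one_mul, this, Matrix.mul_one, hU1]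
  have htr : Matrix.trace (((1 : Matrix (Fin n) (Fin n) ℝ) - t • P)⁻¹ - 1)
      = (∑ i, (v i)⁻¹) - n := by
    rw [Matrix.trace_sub, Matrix.trace_one, hinv, Matrix.trace_mul_cycle,
      hU2, Matrix.one_mul, Matrix.trace_diagonal]
    simp
  have hlog : Real.log (∏ i, v i) = ∑ i, Real.log (v i) :=
    Real.log_prod (fun i _ => hvne i)
  rw [gammaTol, hdet, htr, hlog]
  rw [Finset.sum_sub_distrib, Finset.sum_add_distrib]
  simp [Finset.card_univ]
  ring

/-- For a real symmetric positive definite `P` with largest eigenvalue `λmax`, if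
`θ(c)` denotes the unique value in `(0, 1/λmax)` with `γ(P, θ(c)) = c` for each
`c > 0`, then `c ↦ θ(c)` is strictly monotone increasing on `(0, ∞)`. -/
theorem theta_of_tolerance_strictMonoOn
    {n : ℕ} (hn : 0 < n) (P : Matrix (Fin n) (Fin n) ℝ) (hP : P.PosDef)
    (lmax : ℝ) (hlmax : IsGreatest (Set.range hP.1.eigenvalues) lmax)
    (θ : ℝ → ℝ)
    (hθ : ∀ c : ℝ, 0 < c →
      (0 < θ c ∧ θ c < 1 / lmax ∧ gammaTol P (θ c) = c)) :
    StrictMonoOn θ (Set.Ioi (0 : ℝ)) := by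
  have hlampos : ∀ i, 0 < hP.1.eigenvalues i := hP.eigenvalues_pos
  obtain ⟨i0, hi0⟩ := hlmax.1
  have hlmaxpos : 0 < lmax := hi0 ▸ hlampos i0
  -- eigenvalue bound
  have hle : ∀ i, hP.1.eigenvalues i ≤ lmax := fun i => hlmax.2 ⟨i, rfl⟩
  -- gammaTol strictly monotone on Ico 0 (1/lmax)
  have hmono : StrictMonoOn (gammaTol P) (Set.Ico (0 : ℝ) (1 / lmax)) := by
    intro a ha b hb hab
    have hbound : ∀ t ∈ Set.Ico (0 : ℝ) (1 / lmax), ∀ i,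
        t * hP.1.eigenvalues i ∈ Set.Ico (0 : ℝ) 1 := by
      intro t ht i
      constructor
      · exact mul_nonneg ht.1 (hlampos i).le
      · calc t * hP.1.eigenvalues i ≤ t * lmax :=
              mul_le_mul_of_nonneg_left (hle i) ht.1
          _ < (1 / lmax) * lmax := by
              exact mul_lt_mul_of_pos_right ht.2 hlmaxpos
          _ = 1 := by field_simp
    have hpa : ∀ i, 0 < 1 - a * hP.1.eigenvalues i := fun i => by
      have := (hbound a ha i).2; linarith
    have hpb : ∀ i, 0 < 1 - b * hP.1.eigenvalues i := fun i => by
      have := (hbound b hb i).2; linarith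
    rw [gammaTol_eq_sum P hP hpa, gammaTol_eq_sum P hP hpb]
    have hne : (Finset.univ : Finset (Fin n)).Nonempty := by
      simpa [Finset.univ_nonempty_iff] using Fin.pos_iff_nonempty.mp hn
    have hsum : ∑ i, (Real.log (1 - a * hP.1.eigenvalues i)
          + (1 - a * hP.1.eigenvalues i)⁻¹ - 1)
        < ∑ i, (Real.log (1 - b * hP.1.eigenvalues i)
          + (1 - b * hP.1.eigenvalues i)⁻¹ - 1) := by
      apply Finset.sum_lt_sum_of_nonempty hne
      intro i _
      have hmul : a * hP.1.eigenvalues i < b * hP.1.eigenvalues i :=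
        mul_lt_mul_of_pos_right hab (hlampos i)
      have := scalar_strictMonoOn (hbound a ha i) (hbound b hb i) hmul
      simp only at this
      linarith
    linarith
  intro c1 hc1 c2 hc2 hc12
  obtain ⟨h1p, h1l, h1g⟩ := hθ c1 hc1
  obtain ⟨h2p, h2l, h2g⟩ := hθ c2 hc2
  by_contra hcon
  push_neg at hcon
  have : gammaTol P (θ c2) ≤ gammaTol P (θ c1) := by
    rcases eq_or_lt_of_le hcon with h | h
    · rw [h]
    · exact le_of_lt (hmono ⟨h2p.le, h2l⟩ ⟨h1p.le, h1l⟩ h)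
  rw [h1g, h2g] at this
  exact absurd this (not_le.mpr hc12)
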